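/- Let L be a closed subgroup of SL(2,ℝ) which is not compact. Then there is an infinite sequence (g_n) in L such that for every M > 0 and every ε > 0 there is N with the property that for all n ≥ N, the set R₂ = { ρ ∈ ℝ : κ_{g_n}(ρ) ≤ M } has λ(R₂) ≤ ε, while 0 < κ_{g_n}(ρ) for all ρ; i.e. κ_{g_n} exceeds M on the complementary region R₁ whose complement has λ-measure at most ε. -/

import Mathlib

open MeasureTheory Matrix

set_option maxHeartbeats 2000000

noncomputable section

/-- `SL(2,ℝ)`, the group of real 2×2 matrices of determinant 1. -/
abbrev SL2 := Matrix.SpecialLinearGroup (Fin 2) ℝ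

/-- The Cauchy probability measure on `ℝ`, with density `ρ ↦ 1/(π(1+ρ²))` with
respect to Lebesgue measure. -/
def cauchyM : Measure ℝ :=
  volume.withDensity fun ρ => ENNReal.ofReal (1 / (Real.pi * (1 + ρ ^ 2)))

/-- The Möbius right action `ρ·g = (aρ+c)/(bρ+d)` of `g = [[a,b],[c,d]] ∈ SL(2,ℝ)`
on `ℝ` (here `a = g 0 0`, `b = g 0 1`, `c = g 1 0`, `d = g 1 1`). -/
def mob (g : SL2) (ρ : ℝ) : ℝ :=
  (g.1 0 0 * ρ + g.1 1 0) / (g.1 0 1 * ρ + g.1 1 1)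

/-- The factor `κ_g(ρ) = ((aρ+c)² + (bρ+d)²)/(ρ²+1)`. -/
def kappa (g : SL2) (ρ : ℝ) : ℝ :=
  ((g.1 0 0 * ρ + g.1 1 0) ^ 2 + (g.1 0 1 * ρ + g.1 1 1) ^ 2) / (ρ ^ 2 + 1)


/-- The topology on `SL(2,ℝ)` induced from `ℝ⁴` via the matrix entries. -/
instance : TopologicalSpace SL2 := instTopologicalSpaceSubtype

/-- The squared Frobenius norm of an element of `SL(2,ℝ)`. -/
def Tsq (g : SL2) : ℝ :=
  (g.1 0 0)^2 + (g.1 0 1)^2 + (g.1 1 0)^2 + (g.1 1 1)^2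

lemma cauchy_le_vol {E : Set ℝ} (hE : MeasurableSet E) :
    cauchyM E ≤ ENNReal.ofReal (1 / Real.pi) * volume E := by
  rw [cauchyM, withDensity_apply _ hE]
  calc ∫⁻ x in E, ENNReal.ofReal (1 / (Real.pi * (1 + x ^ 2)))
      ≤ ∫⁻ _x in E, ENNReal.ofReal (1 / Real.pi) := by
        refine lintegral_mono fun x => ENNReal.ofReal_le_ofReal ?_
        have h1 : (0:ℝ) < Real.pi := Real.pi_pos
        apply one_div_le_one_div_of_le h1
        nlinarith [sq_nonneg x]
    _ = ENNReal.ofReal (1 / Real.pi) * volume E := by rw [setLIntegral_const]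

lemma cauchy_Icc_le (p q : ℝ) :
    cauchyM (Set.Icc p q) ≤ ENNReal.ofReal (1 / Real.pi) * ENNReal.ofReal (q - p) := by
  simpa [Real.volume_Icc] using cauchy_le_vol measurableSet_Icc

lemma cauchy_inv_Icc_le (p q : ℝ) :
    cauchyM {ρ : ℝ | ρ ≠ 0 ∧ ρ⁻¹ ∈ Set.Icc p q} ≤
      ENNReal.ofReal (1 / Real.pi) * ENNReal.ofReal (q - p) := by
  set s : Set ℝ := Set.Icc p q \ {0} with hs_def
  have hs : MeasurableSet s := measurableSet_Icc.diff (measurableSet_singleton 0)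
  have himg : {ρ : ℝ | ρ ≠ 0 ∧ ρ⁻¹ ∈ Set.Icc p q} = Inv.inv '' s := by
    ext x
    constructor
    · rintro ⟨hx0, hx⟩
      exact ⟨x⁻¹, ⟨hx, inv_ne_zero hx0⟩, inv_inv x⟩
    · rintro ⟨y, ⟨hy, hy0⟩, rfl⟩
      exact ⟨inv_ne_zero hy0, by rwa [inv_inv]⟩
  have himg_meas : MeasurableSet (Inv.inv '' s) := by
    have : Inv.inv '' s = Inv.inv ⁻¹' s := by
      ext x; constructor
      · rintro ⟨y, hy, rfl⟩; simpa [inv_inv] using hy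
      · intro hx; exact ⟨x⁻¹, hx, inv_inv x⟩
    rw [this]
    exact hs.preimage measurable_inv
  have hderiv : ∀ x ∈ s, HasDerivWithinAt (Inv.inv : ℝ → ℝ) (-(x ^ 2)⁻¹) s x := by
    intro x hx
    exact (hasDerivAt_inv hx.2).hasDerivWithinAt
  have hinj : Set.InjOn (Inv.inv : ℝ → ℝ) s := by
    intro x hx y hy h
    have := congrArg Inv.inv h
    rwa [inv_inv, inv_inv] at this
  have key := lintegral_image_eq_lintegral_abs_det_fderiv_mul volume hs
    (fun x hx => ((hderiv x hx).hasFDerivWithinAt)) hinj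
    (fun x => ENNReal.ofReal (1 / (Real.pi * (1 + x ^ 2))))
  rw [cauchyM, himg, withDensity_apply _ himg_meas, key]
  have hcongr : ∀ x ∈ s,
      ENNReal.ofReal |(ContinuousLinearMap.smulRight (1 : ℝ →L[ℝ] ℝ) (-(x ^ 2)⁻¹)).det| *
        ENNReal.ofReal (1 / (Real.pi * (1 + (x⁻¹) ^ 2)))
      = ENNReal.ofReal (1 / (Real.pi * (1 + x ^ 2))) := by
    intro x hx
    have hx0 : x ≠ 0 := hx.2
    rw [ContinuousLinearMap.smulRight_one_eq_toSpanSingleton, ContinuousLinearMap.det_toSpanSingleton]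
    rw [← ENNReal.ofReal_mul (abs_nonneg _)]
    congr 1
    rw [abs_neg, abs_inv, abs_of_nonneg (sq_nonneg x)]
    have hx2 : (x:ℝ)^2 ≠ 0 := pow_ne_zero 2 hx0
    have hπ : Real.pi ≠ 0 := Real.pi_ne_zero
    field_simp
    ring
  calc ∫⁻ x in s, ENNReal.ofReal |(ContinuousLinearMap.smulRight (1 : ℝ →L[ℝ] ℝ) (-(x ^ 2)⁻¹)).det| *
        ENNReal.ofReal (1 / (Real.pi * (1 + (x⁻¹) ^ 2)))
      = ∫⁻ x in s, ENNReal.ofReal (1 / (Real.pi * (1 + x ^ 2))) := by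
        refine setLIntegral_congr_fun hs hcongr
    _ ≤ ∫⁻ _x in s, ENNReal.ofReal (1 / Real.pi) := by
        refine lintegral_mono fun x => ENNReal.ofReal_le_ofReal ?_
        apply one_div_le_one_div_of_le Real.pi_pos
        nlinarith [sq_nonneg x, Real.pi_pos]
    _ = ENNReal.ofReal (1 / Real.pi) * volume s := by rw [setLIntegral_const]
    _ ≤ ENNReal.ofReal (1 / Real.pi) * ENNReal.ofReal (q - p) := by
        refine mul_le_mul_right ?_ _
        calc volume s ≤ volume (Set.Icc p q) := measure_mono Set.diff_subset
          _ = ENNReal.ofReal (q - p) := Real.volume_Icc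

lemma exists_large (L : Subgroup SL2) (hclosed : IsClosed (L : Set SL2))
    (hnc : ¬ IsCompact (L : Set SL2)) : ∀ C : ℝ, ∃ g ∈ L, C < Tsq g := by
  by_contra h
  push_neg at h
  obtain ⟨C, hC⟩ := h
  apply hnc
  have hdetclosed : IsClosed {A : Matrix (Fin 2) (Fin 2) ℝ | A.det = 1} :=
    isClosed_eq (continuous_id.matrix_det) continuous_const
  have hemb := hdetclosed.isClosedEmbedding_subtypeVal
  erw [Subtype.isCompact_iff]
  set D : ℝ := Real.sqrt (max C 0) + 1 with hD_def
  set K : Set (Matrix (Fin 2) (Fin 2) ℝ) :=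
    Set.univ.pi (fun _i : Fin 2 => Set.univ.pi
      (fun _j : Fin 2 => Set.Icc (-D) D)) with hK_def
  have hK : IsCompact K :=
    isCompact_univ_pi fun _i => isCompact_univ_pi fun _j => isCompact_Icc
  apply IsCompact.of_isClosed_subset hK
  · exact hemb.isClosedMap _ hclosed
  · rintro A ⟨g, hgL, rfl⟩
    intro i _ j _
    have hT : Tsq g ≤ C := hC g hgL
    have hsq : (g.1 i j)^2 ≤ Tsq g := by
      unfold Tsq
      fin_cases i <;> fin_cases j <;>
        simp only [Fin.zero_eta, Fin.mk_one, Fin.isValue] <;>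
        nlinarith [sq_nonneg (g.1 0 0), sq_nonneg (g.1 0 1), sq_nonneg (g.1 1 0),
          sq_nonneg (g.1 1 1)]
    have hD2 : (Real.sqrt (max C 0))^2 = max C 0 := Real.sq_sqrt (le_max_right _ _)
    have hs0 : 0 ≤ Real.sqrt (max C 0) := Real.sqrt_nonneg _
    have hCmax : C ≤ max C 0 := le_max_left _ _
    constructor <;> nlinarith [hsq, hT, hD2, hs0, hCmax]

lemma quad_subset_Icc (a b c d M T2 : ℝ) (hdet2 : (a*d - b*c)^2 = 1)
    (hT2 : T2 = a^2+b^2+c^2+d^2) (hA : 0 < a^2 + b^2 - M) :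
    {ρ : ℝ | (a*ρ+c)^2 + (b*ρ+d)^2 ≤ M*(ρ^2+1)} ⊆
      Set.Icc ((-(a*c+b*d) - Real.sqrt (M*T2))/(a^2+b^2-M))
              ((-(a*c+b*d) + Real.sqrt (M*T2))/(a^2+b^2-M)) := by
  intro ρ hρ
  simp only [Set.mem_setOf_eq] at hρ
  set A : ℝ := a^2+b^2-M with hA_def
  set E : ℝ := a*c+b*d with hE_def
  have hP1 : 0 ≤ A * (M*(ρ^2+1) - ((a*ρ+c)^2 + (b*ρ+d)^2)) :=
    mul_nonneg hA.le (by linarith)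
  have hid : (A*ρ + E)^2 = -(A * (M*(ρ^2+1) - ((a*ρ+c)^2 + (b*ρ+d)^2)))
      + M*T2 - M^2 - (a*d - b*c)^2 := by
    rw [hA_def, hE_def, hT2]; ring
  have key : (A*ρ + E)^2 ≤ M*T2 := by
    rw [hid, hdet2]; nlinarith [hP1, sq_nonneg M]
  have habs : |A*ρ + E| ≤ Real.sqrt (M*T2) := by
    rw [← Real.sqrt_sq_eq_abs]
    exact Real.sqrt_le_sqrt key
  rw [abs_le] at habs
  constructor
  · rw [div_le_iff₀ hA]
    nlinarith [habs.1]
  · rw [le_div_iff₀ hA]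
    nlinarith [habs.2]

lemma bound_arith (M ε T2 A E : ℝ) (hM : 0 < M) (hε : 0 < ε)
    (hT2 : 64*M/ε^2 ≤ T2) (hT2M : 4*M ≤ T2) (hA : T2/4 ≤ A) :
    (-E + Real.sqrt (M*T2))/A - (-E - Real.sqrt (M*T2))/A ≤ ε := by
  have hT2pos : 0 < T2 := lt_of_lt_of_le (by positivity) hT2M
  have hApos : 0 < A := by linarith
  have h64 : 64*M ≤ T2 * ε^2 := by
    rw [div_le_iff₀ (by positivity)] at hT2; linarith
  have hs : Real.sqrt (M*T2) ≤ ε*T2/8 := by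
    rw [show ε*T2/8 = Real.sqrt ((ε*T2/8)^2) from (Real.sqrt_sq (by positivity)).symm]
    apply Real.sqrt_le_sqrt
    nlinarith
  rw [div_sub_div_same, show -E + Real.sqrt (M*T2) - (-E - Real.sqrt (M*T2)) =
    2 * Real.sqrt (M*T2) from by ring, div_le_iff₀ hApos]
  nlinarith [hs, hε.le, hA, hT2pos]

lemma pi_factor_le_one : ENNReal.ofReal (1 / Real.pi) ≤ 1 := by
  rw [ENNReal.ofReal_le_one, div_le_one Real.pi_pos]
  linarith [Real.pi_gt_three]

/-- If `L` is a closed non-compact subgroup of `SL(2,ℝ)`, there is a sequence `(g_n)`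
in `L` such that for every `M > 0` and `ε > 0`, eventually in `n` the region
`R₂ = {ρ : κ_{g_n}(ρ) ≤ M}` has `λ(R₂) ≤ ε` while `κ_{g_n} > 0` everywhere; i.e.
`κ_{g_n}` exceeds `M` on the complementary region `R₁` whose complement has λ-measure
at most `ε`. -/
theorem kappa_blowup_of_noncompact_closed_subgroup
    (L : Subgroup SL2) (hclosed : IsClosed (L : Set SL2))
    (hnc : ¬ IsCompact (L : Set SL2)) :
    ∃ g : ℕ → SL2, (∀ n, g n ∈ L) ∧
      ∀ M > (0 : ℝ), ∀ ε > (0 : ℝ), ∃ N : ℕ, ∀ n ≥ N,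
        cauchyM {ρ : ℝ | kappa (g n) ρ ≤ M} ≤ ENNReal.ofReal ε ∧
        ∀ ρ : ℝ, 0 < kappa (g n) ρ := by
  have key := exists_large L hclosed hnc
  choose gg hgL hgT using fun n : ℕ => key n
  refine ⟨gg, hgL, ?_⟩
  intro M hM ε hε
  obtain ⟨N, hN⟩ := exists_nat_ge (max (4*M) (64*M/ε^2))
  refine ⟨N, fun n hn => ?_⟩
  have hgTn := hgT n
  unfold Tsq at hgTn
  obtain ⟨a, ha⟩ : ∃ x : ℝ, x = (gg n).1 0 0 := ⟨_, rfl⟩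
  obtain ⟨b, hb⟩ : ∃ x : ℝ, x = (gg n).1 0 1 := ⟨_, rfl⟩
  obtain ⟨c, hc⟩ : ∃ x : ℝ, x = (gg n).1 1 0 := ⟨_, rfl⟩
  obtain ⟨d, hd⟩ : ∃ x : ℝ, x = (gg n).1 1 1 := ⟨_, rfl⟩
  rw [← ha, ← hb, ← hc, ← hd] at hgTn
  have hdet : a*d - b*c = 1 := by
    have h2 := (gg n).2
    rw [Matrix.det_fin_two] at h2
    rw [← ha, ← hb, ← hc, ← hd] at h2
    exact h2
  have hdet2 : (a*d - b*c)^2 = 1 := by rw [hdet]; norm_num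
  set T2 : ℝ := a^2 + b^2 + c^2 + d^2 with hT2_def
  have hNn : (N:ℝ) ≤ (n:ℝ) := Nat.cast_le.mpr hn
  have hT2big : max (4*M) (64*M/ε^2) ≤ T2 := by
    calc max (4*M) (64*M/ε^2) ≤ (N:ℝ) := hN
      _ ≤ (n:ℝ) := hNn
      _ ≤ T2 := hgTn.le
  have hT2M : 4*M ≤ T2 := le_trans (le_max_left _ _) hT2big
  have hT2e : 64*M/ε^2 ≤ T2 := le_trans (le_max_right _ _) hT2big
  have hT2pos : 0 < T2 := by nlinarith
  -- positivity of kappa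
  have hpos : ∀ ρ : ℝ, 0 < kappa (gg n) ρ := by
    intro ρ
    unfold kappa
    rw [← ha, ← hb, ← hc, ← hd]
    apply div_pos ?_ (by positivity)
    by_contra hcon
    push_neg at hcon
    have h1 : a*ρ+c = 0 := by nlinarith [sq_nonneg (a*ρ+c), sq_nonneg (b*ρ+d)]
    have h2 : b*ρ+d = 0 := by nlinarith [sq_nonneg (a*ρ+c), sq_nonneg (b*ρ+d)]
    have : (0:ℝ) = 1 := by linear_combination b*h1 - a*h2 + hdet
    norm_num at this
  refine ⟨?_, hpos⟩
  -- the set in quadratic form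
  have hset : {ρ : ℝ | kappa (gg n) ρ ≤ M} ⊆
      {ρ : ℝ | (a*ρ+c)^2 + (b*ρ+d)^2 ≤ M*(ρ^2+1)} := by
    intro ρ hρ
    simp only [Set.mem_setOf_eq] at hρ ⊢
    unfold kappa at hρ
    rw [← ha, ← hb, ← hc, ← hd] at hρ
    rw [div_le_iff₀ (by positivity : (0:ℝ) < ρ^2+1)] at hρ
    linarith
  rcases le_or_gt (T2/2) (a^2+b^2) with hcase | hcase
  · -- case 1 : a² + b² large
    have hA : 0 < a^2 + b^2 - M := by linarith
    have hA4 : T2/4 ≤ a^2 + b^2 - M := by linarith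
    have hsub := quad_subset_Icc a b c d M T2 hdet2 hT2_def hA
    calc cauchyM {ρ : ℝ | kappa (gg n) ρ ≤ M}
        ≤ cauchyM (Set.Icc ((-(a*c+b*d) - Real.sqrt (M*T2))/(a^2+b^2-M))
            ((-(a*c+b*d) + Real.sqrt (M*T2))/(a^2+b^2-M))) :=
          measure_mono (hset.trans hsub)
      _ ≤ ENNReal.ofReal (1 / Real.pi) * ENNReal.ofReal
            ((-(a*c+b*d) + Real.sqrt (M*T2))/(a^2+b^2-M)
              - (-(a*c+b*d) - Real.sqrt (M*T2))/(a^2+b^2-M)) := cauchy_Icc_le _ _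
      _ ≤ 1 * ENNReal.ofReal ε := by
          refine mul_le_mul' pi_factor_le_one (ENNReal.ofReal_le_ofReal ?_)
          exact bound_arith M ε T2 _ _ hM hε hT2e hT2M hA4
      _ = ENNReal.ofReal ε := one_mul _
  · -- case 2 : c² + d² large
    have hcd : T2/2 ≤ c^2 + d^2 := by nlinarith
    have hC : 0 < c^2 + d^2 - M := by linarith
    have hC4 : T2/4 ≤ c^2 + d^2 - M := by linarith
    have hsub := quad_subset_Icc c d a b M T2 (by linear_combination hdet2)
      (by rw [hT2_def]; ring) hC
    have hsub2 : {ρ : ℝ | kappa (gg n) ρ ≤ M} ⊆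
        {ρ : ℝ | ρ ≠ 0 ∧ ρ⁻¹ ∈ Set.Icc ((-(c*a+d*b) - Real.sqrt (M*T2))/(c^2+d^2-M))
          ((-(c*a+d*b) + Real.sqrt (M*T2))/(c^2+d^2-M))} := by
      intro ρ hρ
      have hρ' := hset hρ
      simp only [Set.mem_setOf_eq] at hρ' ⊢
      have hρ0 : ρ ≠ 0 := by
        rintro rfl
        simp only [mul_zero, zero_add] at hρ'
        nlinarith
      refine ⟨hρ0, ?_⟩
      apply hsub
      simp only [Set.mem_setOf_eq]
      have hmul : ρ * ρ⁻¹ = 1 := mul_inv_cancel₀ hρ0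
      have e1 : c*ρ⁻¹ + a = (a*ρ+c)*ρ⁻¹ := by linear_combination (-a) * hmul
      have e2 : d*ρ⁻¹ + b = (b*ρ+d)*ρ⁻¹ := by linear_combination (-b) * hmul
      have e3 : M*((ρ⁻¹)^2+1) = ((ρ⁻¹)^2) * (M*(ρ^2+1)) := by
        linear_combination (-(M*(ρ*ρ⁻¹+1)))*hmul
      rw [e1, e2, e3]
      calc ((a*ρ+c)*ρ⁻¹)^2 + ((b*ρ+d)*ρ⁻¹)^2
          = ((ρ⁻¹)^2) * ((a*ρ+c)^2 + (b*ρ+d)^2) := by ring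
        _ ≤ ((ρ⁻¹)^2) * (M*(ρ^2+1)) :=
            mul_le_mul_of_nonneg_left hρ' (sq_nonneg _)
    calc cauchyM {ρ : ℝ | kappa (gg n) ρ ≤ M}
        ≤ cauchyM {ρ : ℝ | ρ ≠ 0 ∧ ρ⁻¹ ∈ Set.Icc ((-(c*a+d*b) - Real.sqrt (M*T2))/(c^2+d^2-M))
            ((-(c*a+d*b) + Real.sqrt (M*T2))/(c^2+d^2-M))} := measure_mono hsub2
      _ ≤ ENNReal.ofReal (1 / Real.pi) * ENNReal.ofReal
            ((-(c*a+d*b) + Real.sqrt (M*T2))/(c^2+d^2-M)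
              - (-(c*a+d*b) - Real.sqrt (M*T2))/(c^2+d^2-M)) := cauchy_inv_Icc_le _ _
      _ ≤ 1 * ENNReal.ofReal ε := by
          refine mul_le_mul' pi_factor_le_one (ENNReal.ofReal_le_ofReal ?_)
          exact bound_arith M ε T2 _ _ hM hε hT2e hT2M hC4
      _ = ENNReal.ofReal ε := one_mul _
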